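/- arXiv:2309.10593 — 2 statements merged into one kernel-verified Lean document; each statement's English description precedes it below -/
import Mathlib

section
/- Let n ≥ 1 and let Φ : Matrix (Fin n) (Fin n) ℂ → Matrix (Fin n) (Fin n) ℂ be a quantum channel (linear, trace-preserving, completely positive). Then there exist a natural number m with 1 ≤ m ≤ n² and a unitary matrix U ∈ Matrix ((Fin n) × (Fin m)) ((Fin n) × (Fin m)) ℂ such that for every ρ ∈ Matrix (Fin n) (Fin n) ℂ, Φ(ρ) = Tr_B[U · (ρ ⊗ |0⟩⟨0|_B) · U†]. -/
set_option maxHeartbeats 1000000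

open Matrix Kronecker ComplexOrder

/-- Partial trace over the second factor `B`. -/
noncomputable def ptraceB {A B : Type*} [Fintype B] (M : Matrix (A × B) (A × B) ℂ) :
    Matrix A A ℂ :=
  Matrix.of fun a a' => ∑ b : B, M (a, b) (a', b)

/-- The ancilla state `|0⟩⟨0|` on `Fin m`. -/
def ket0bra0 (m : ℕ) : Matrix (Fin m) (Fin m) ℂ :=
  Matrix.of fun i j => if i.val = 0 ∧ j.val = 0 then 1 else 0

open scoped MatrixOrder in
theorem posSemidef_iff_eq_transpose_mul_self {ι : Type*} [Fintype ι] [DecidableEq ι]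
    {M : Matrix ι ι ℂ} : M.PosSemidef ↔ ∃ B : Matrix ι ι ℂ, M = Bᴴ * B := by
  refine ⟨fun h => ?_, fun ⟨B, hB⟩ => hB ▸ posSemidef_conjTranspose_mul_self B⟩
  obtain ⟨X, hX, -, hXM⟩ :=
    sub_zero M ▸ CFC.exists_sqrt_of_isSelfAdjoint_of_quasispectrumRestricts h.isHermitian
      (QuasispectrumRestricts.nnreal_of_nonneg h.nonneg)
  refine ⟨X, ?_⟩
  rw [sub_zero] at hXM
  rw [← hXM]
  exact congrArg (· * X) hX.star_eq.symm

/-- **Stinespring dilation theorem**: any linear, trace-preserving, completely positive map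
on `n × n` complex matrices (`n ≥ 1`) arises as `ρ ↦ Tr_B[U (ρ ⊗ |0⟩⟨0|) U†]` for some unitary
`U` on an extended system with ancilla dimension `m`, `1 ≤ m ≤ n²`. -/
theorem stinespring_dilation (n : ℕ) (hn : 1 ≤ n)
    (Φ : Matrix (Fin n) (Fin n) ℂ →ₗ[ℂ] Matrix (Fin n) (Fin n) ℂ)
    (htp : ∀ ρ : Matrix (Fin n) (Fin n) ℂ, (Φ ρ).trace = ρ.trace)
    (hcp : ∀ (C : Type) [Fintype C], ∀ X : Matrix (C × Fin n) (C × Fin n) ℂ, X.PosSemidef →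
      (Matrix.of fun p q : C × Fin n =>
        Φ (Matrix.of fun a a' => X (p.1, a) (q.1, a')) p.2 q.2).PosSemidef) :
    ∃ m : ℕ, 1 ≤ m ∧ m ≤ n ^ 2 ∧
      ∃ U : Matrix (Fin n × Fin m) (Fin n × Fin m) ℂ,
        Uᴴ * U = 1 ∧ U * Uᴴ = 1 ∧
        ∀ ρ : Matrix (Fin n) (Fin n) ℂ,
          Φ ρ = ptraceB (U * (ρ ⊗ₖ ket0bra0 m) * Uᴴ) := by
  classical
  -- Step 1: the Choi matrix is positive semidefinite, hence of the form `Bᴴ * B`.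
  obtain ⟨B, hB⟩ : ∃ B : Matrix (Fin n × Fin n) (Fin n × Fin n) ℂ, ∀ i j : Fin n,
      Φ (single i j 1) = Matrix.of fun a a' => ∑ k : Fin n × Fin n,
        star (B k (i, a)) * B k (j, a') := by
    set z : Fin n × Fin n := (⟨0, hn⟩, ⟨0, hn⟩) with hz
    set A : Matrix (Fin n × Fin n) (Fin n × Fin n) ℂ :=
      Matrix.of fun p q => if p = z then (if q.1 = q.2 then 1 else 0) else 0 with hA
    have hX : (Aᴴ * A).PosSemidef := posSemidef_conjTranspose_mul_self A
    have hXent : ∀ p q : Fin n × Fin n, (Aᴴ * A) p q =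
        (if p.1 = p.2 then 1 else 0) * (if q.1 = q.2 then 1 else 0) := by
      intro p q
      simp [Matrix.mul_apply, hA, apply_ite (star : ℂ → ℂ), ite_mul, Finset.sum_ite_eq']
    have hChoi := hcp (Fin n) (Aᴴ * A) hX
    have hent : ∀ p q : Fin n × Fin n,
        (Matrix.of fun a a' => (Aᴴ * A) ((p.1, a)) ((q.1, a'))) = single p.1 q.1 (1:ℂ) := by
      intro p q
      ext a a'
      by_cases h1 : p.1 = a <;> by_cases h2 : q.1 = a' <;>
        simp [hXent, single, h1, h2]
    have heq : (Matrix.of fun p q : Fin n × Fin n =>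
          Φ (Matrix.of fun a a' => (Aᴴ * A) (p.1, a) (q.1, a')) p.2 q.2)
        = Matrix.of fun p q : Fin n × Fin n => Φ (single p.1 q.1 1) p.2 q.2 := by
      ext p q
      simp only [Matrix.of_apply]
      rw [hent p q]
    rw [heq] at hChoi
    obtain ⟨B, hB⟩ := posSemidef_iff_eq_transpose_mul_self.mp hChoi
    refine ⟨B, fun i j => ?_⟩
    ext a a'
    have := congrFun (congrFun hB (i, a)) (j, a')
    simpa [Matrix.mul_apply] using this
  -- Step 2: Kraus decomposition of `Φ`.
  set K : Fin n × Fin n → Matrix (Fin n) (Fin n) ℂ :=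
    fun k => Matrix.of fun a i => star (B k (i, a)) with hKdef
  have hbase : ∀ i j : Fin n, Φ (single i j 1)
      = ∑ k : Fin n × Fin n, K k * single i j 1 * (K k)ᴴ := by
    intro i j
    rw [hB i j]
    ext a a'
    simp [Matrix.sum_apply, Matrix.mul_apply, single, ite_and, hKdef,
      Finset.sum_ite_eq, Finset.sum_ite_eq']
  have hKraus : ∀ ρ : Matrix (Fin n) (Fin n) ℂ,
      Φ ρ = ∑ k : Fin n × Fin n, K k * ρ * (K k)ᴴ := by
    intro ρ
    have hexp : ρ = ∑ i : Fin n, ∑ j : Fin n, ρ i j • single i j 1 :=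
      calc ρ = ∑ i : Fin n, ∑ j : Fin n, single i j (ρ i j) :=
            matrix_eq_sum_single ρ
        _ = _ := by
            refine Finset.sum_congr rfl fun i _ => Finset.sum_congr rfl fun j _ => ?_
            rw [smul_single]; simp
    have h1 : ∀ k, K k * ρ * (K k)ᴴ
        = ∑ i : Fin n, ∑ j : Fin n, ρ i j • (K k * single i j 1 * (K k)ᴴ) := by
      intro k
      conv_lhs => rw [hexp]
      simp only [Finset.mul_sum, Finset.sum_mul, Matrix.mul_smul, Matrix.smul_mul]
    calc Φ ρ = ∑ i : Fin n, ∑ j : Fin n, ∑ k : Fin n × Fin n,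
          ρ i j • (K k * single i j 1 * (K k)ᴴ) := by
          conv_lhs => rw [hexp]
          simp only [map_sum, _root_.map_smul, hbase, Finset.smul_sum]
      _ = ∑ i : Fin n, ∑ k : Fin n × Fin n, ∑ j : Fin n,
          ρ i j • (K k * single i j 1 * (K k)ᴴ) :=
          Finset.sum_congr rfl fun i _ => Finset.sum_comm
      _ = ∑ k : Fin n × Fin n, ∑ i : Fin n, ∑ j : Fin n,
          ρ i j • (K k * single i j 1 * (K k)ᴴ) := Finset.sum_comm
      _ = ∑ k : Fin n × Fin n, K k * ρ * (K k)ᴴ :=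
          Finset.sum_congr rfl fun k _ => (h1 k).symm
  -- Step 3: trace preservation gives `∑ Kᴴ K = 1`.
  have hsum : ∑ k : Fin n × Fin n, (K k)ᴴ * K k = 1 := by
    have h : ∀ ρ : Matrix (Fin n) (Fin n) ℂ,
        ((∑ k : Fin n × Fin n, (K k)ᴴ * K k) * ρ).trace = ρ.trace := by
      intro ρ
      have htr : (∑ k : Fin n × Fin n, K k * ρ * (K k)ᴴ).trace = ρ.trace := by
        rw [← hKraus ρ]; exact htp ρ
      rw [Finset.sum_mul, trace_sum, ← htr, trace_sum]
      exact Finset.sum_congr rfl fun k _ => (trace_mul_cycle (K k) ρ (K k)ᴴ).symm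
    ext i j
    have := h (single j i 1)
    simp only [trace, diag, Matrix.mul_apply, single, Matrix.of_apply, mul_ite,
      mul_one, mul_zero, ite_and, Finset.sum_ite_eq', Finset.mem_univ, if_true] at this
    simpa [one_apply, eq_comm] using this
  -- Step 4: construct the unitary dilation.
  have hm : 0 < n ^ 2 := Nat.one_le_pow 2 n hn
  set e : Fin n × Fin n ≃ Fin (n ^ 2) :=
    finProdFinEquiv.trans (finCongr (by ring)) with he
  set z : Fin (n ^ 2) := ⟨0, hm⟩ with hzdef
  set w : Fin n → EuclideanSpace ℂ (Fin n × Fin (n ^ 2)) :=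
    fun c => WithLp.toLp 2 (fun p => K (e.symm p.2) p.1 c) with hwdef
  have hw : ∀ c c' : Fin n, (inner ℂ (w c) (w c') : ℂ) = if c = c' then 1 else 0 := by
    intro c c'
    have h1 := congrFun (congrFun hsum c) c'
    simp only [Matrix.sum_apply, Matrix.mul_apply, conjTranspose_apply, one_apply] at h1
    calc (inner ℂ (w c) (w c') : ℂ)
        = ∑ p : Fin n × Fin (n ^ 2), star (w c p) * w c' p := by
          simp [PiLp.inner_apply, RCLike.inner_apply, mul_comm]
      _ = ∑ a : Fin n, ∑ b : Fin (n ^ 2),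
            star (K (e.symm b) a c) * K (e.symm b) a c' := by
          rw [Fintype.sum_prod_type]
      _ = ∑ b : Fin (n ^ 2), ∑ a : Fin n,
            star (K (e.symm b) a c) * K (e.symm b) a c' := Finset.sum_comm
      _ = ∑ k : Fin n × Fin n, ∑ a : Fin n, star (K k a c) * K k a c' :=
          Equiv.sum_comp e.symm (fun k => ∑ a : Fin n, star (K k a c) * K k a c')
      _ = if c = c' then 1 else 0 := h1
  have hres : Orthonormal ℂ
      (Set.restrict {p : Fin n × Fin (n ^ 2) | p.2 = z}
        (fun p : Fin n × Fin (n ^ 2) => w p.1)) := by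
    rw [orthonormal_iff_ite]
    rintro ⟨⟨c, d⟩, (hd : d = z)⟩ ⟨⟨c', d'⟩, (hd' : d' = z)⟩
    show inner ℂ (w c) (w c') = _
    rw [hw c c']
    simp [Subtype.ext_iff, Prod.ext_iff, hd, hd']
  obtain ⟨b, hb⟩ := hres.exists_orthonormalBasis_extension_of_card_eq
    (by simp [finrank_euclideanSpace])
  set U : Matrix (Fin n × Fin (n ^ 2)) (Fin n × Fin (n ^ 2)) ℂ :=
    Matrix.of fun p q => b q p with hUdef
  have hU1 : Uᴴ * U = 1 := by
    ext p q
    have h := orthonormal_iff_ite.mp b.orthonormal p q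
    simp only [PiLp.inner_apply, RCLike.inner_apply] at h
    simpa [Matrix.mul_apply, conjTranspose_apply, one_apply, hUdef, mul_comm] using h
  have hU2 : U * Uᴴ = 1 := mul_eq_one_comm.mp hU1
  refine ⟨n ^ 2, hm, le_rfl, U, hU1, hU2, ?_⟩
  have hU0 : ∀ (x : Fin n) (y : Fin (n ^ 2)) (c : Fin n),
      U (x, y) (c, z) = K (e.symm y) x c := by
    intro x y c
    show b (c, z) (x, y) = _
    rw [hb (c, z) rfl]
  intro ρ
  have hkr : ∀ p q : Fin n × Fin (n ^ 2),
      (ρ ⊗ₖ ket0bra0 (n ^ 2)) p q = if p.2 = z ∧ q.2 = z then ρ p.1 q.1 else 0 := by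
    intro p q
    have h0 : ∀ d : Fin (n ^ 2), d.val = 0 ↔ d = z := by
      intro d; rw [Fin.ext_iff]
    simp [kroneckerMap_apply, ket0bra0, h0, mul_ite]
  set N := U * (ρ ⊗ₖ ket0bra0 (n ^ 2)) with hN
  set M := N * Uᴴ with hM
  rw [hKraus ρ]
  ext a a'
  simp only [ptraceB, Matrix.of_apply]
  have hterm : ∀ b' : Fin (n ^ 2),
      M (a, b') (a', b')
        = ∑ c' : Fin n, ∑ c : Fin n,
            K (e.symm b') a c * ρ c c' * star (K (e.symm b') a' c') := by
    intro b'
    rw [hM, Matrix.mul_apply]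
    calc ∑ q : Fin n × Fin (n ^ 2), N (a, b') q * (Uᴴ) q (a', b')
        = ∑ q : Fin n × Fin (n ^ 2),
            (∑ p : Fin n × Fin (n ^ 2), U (a, b') p *
              (if p.2 = z ∧ q.2 = z then ρ p.1 q.1 else 0)) * star (U (a', b') q) := by
          refine Finset.sum_congr rfl fun q _ => ?_
          rw [hN, Matrix.mul_apply, conjTranspose_apply]
          congr 1
          exact Finset.sum_congr rfl fun p _ => by rw [hkr]
      _ = ∑ c' : Fin n, ∑ c : Fin n,
            K (e.symm b') a c * ρ c c' * star (K (e.symm b') a' c') := by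
          simp only [Fintype.sum_prod_type, mul_ite, mul_zero, ite_and, mul_one]
          simp only [Finset.sum_ite_eq', Finset.mem_univ, if_true, ite_mul, zero_mul,
            Finset.sum_ite_eq, hU0]
          simp only [Finset.sum_ite_irrel, Finset.sum_const_zero, ite_mul, zero_mul,
            Finset.sum_ite_eq', Finset.mem_univ, if_true, hU0]
          exact Finset.sum_congr rfl fun c' _ => by rw [Finset.sum_mul]
  rw [Finset.sum_congr rfl fun b' _ => hterm b']
  rw [Equiv.sum_comp e.symm (fun k => ∑ c' : Fin n, ∑ c : Fin n,
      K k a c * ρ c c' * star (K k a' c'))]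
  simp only [Matrix.sum_apply, Matrix.mul_apply, conjTranspose_apply]
  exact Finset.sum_congr rfl fun k _ =>
    Finset.sum_congr rfl fun c' _ => by rw [Finset.sum_mul]
end

section
/- Let n, k ≥ 1 and let K_0, …, K_{k−1} ∈ Matrix (Fin n) (Fin n) ℂ satisfy ∑_{i=0}^{k−1} K_i† K_i = I_n. Then there exists a unitary matrix U ∈ Matrix ((Fin n) × (Fin k)) ((Fin n) × (Fin k)) ℂ such that for every ρ ∈ Matrix (Fin n) (Fin n) ℂ, ∑_{i=0}^{k−1} K_i ρ K_i† = Tr_B[U · (ρ ⊗ |0⟩⟨0|_B) · U†]. In particular, a quantum channel with k Kraus operators admits a Stinespring dilation with ancilla space of dimension exactly k. -/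
open Matrix Kronecker

/-- A quantum channel given by `k` Kraus operators satisfying the completeness relation
admits a Stinespring dilation with ancilla space of dimension exactly `k`. -/
theorem stinespring_dilation_of_kraus (n k : ℕ) (hn : 1 ≤ n) (hk : 1 ≤ k)
    (K : Fin k → Matrix (Fin n) (Fin n) ℂ)
    (hK : ∑ i : Fin k, (K i)ᴴ * K i = 1) :
    ∃ U : Matrix (Fin n × Fin k) (Fin n × Fin k) ℂ,
      Uᴴ * U = 1 ∧ U * Uᴴ = 1 ∧
      ∀ ρ : Matrix (Fin n) (Fin n) ℂ,
        ∑ i : Fin k, K i * ρ * (K i)ᴴ = ptraceB (U * (ρ ⊗ₖ ket0bra0 k) * Uᴴ) := by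
  classical
  haveI : NeZero k := ⟨by omega⟩
  haveI : NeZero n := ⟨by omega⟩
  let f : Fin n × Fin k → EuclideanSpace ℂ (Fin n × Fin k) :=
    fun p => WithLp.toLp 2 (fun q : Fin n × Fin k => K q.2 q.1 p.1)
  have hinner : ∀ p q : Fin n × Fin k,
      (inner ℂ (f p) (f q) : ℂ) = (if p.1 = q.1 then (1:ℂ) else 0) := by
    intro p q
    have h1 : (inner ℂ (f p) (f q) : ℂ)
        = ∑ r : Fin n × Fin k, (starRingEnd ℂ) (K r.2 r.1 p.1) * K r.2 r.1 q.1 := by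
      simp [PiLp.inner_apply, RCLike.inner_apply, f]
      exact Finset.sum_congr rfl fun _ _ => mul_comm _ _
    have h2 : (∑ i : Fin k, (K i)ᴴ * K i) p.1 q.1
        = ∑ r : Fin n × Fin k, (starRingEnd ℂ) (K r.2 r.1 p.1) * K r.2 r.1 q.1 := by
      rw [Fintype.sum_prod_type]
      simp only [Matrix.sum_apply, Matrix.mul_apply, Matrix.conjTranspose_apply]
      rw [Finset.sum_comm]
      rfl
    rw [h1, ← h2, hK, Matrix.one_apply]
  obtain ⟨b, hb⟩ := Orthonormal.exists_orthonormalBasis_extension_of_card_eq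
    (𝕜 := ℂ) (E := EuclideanSpace ℂ (Fin n × Fin k))
    (by simp) (v := f) (s := {p | p.2 = 0})
    (by
      rw [orthonormal_iff_ite]
      rintro ⟨⟨c, j⟩, hj⟩ ⟨⟨c', j'⟩, hj'⟩
      simp only [Set.mem_setOf_eq] at hj hj'
      simp only [Set.restrict_apply, hinner]
      subst hj; subst hj'
      simp [Subtype.ext_iff, Prod.ext_iff])
  set U : Matrix (Fin n × Fin k) (Fin n × Fin k) ℂ := Matrix.of fun x p => b p x with hUdef
  have hUU : Uᴴ * U = 1 := by
    ext p q
    have h := (orthonormal_iff_ite.mp b.orthonormal) p q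
    rw [PiLp.inner_apply] at h
    simp only [RCLike.inner_apply] at h
    simpa [U, Matrix.mul_apply, Matrix.conjTranspose_apply, Matrix.one_apply, mul_comm] using h
  have hU0 : ∀ (x : Fin n × Fin k) (c : Fin n), U x (c, 0) = K x.2 x.1 c := by
    intro x c
    have h := hb (c, 0) (by simp [Set.mem_setOf_eq])
    have := congrArg (fun v => v x) h
    simpa [U, f] using this
  refine ⟨U, hUU, mul_eq_one_comm.mp hUU, ?_⟩
  intro ρ
  ext a a'
  have hM : ∀ z w : Fin n × Fin k, (ρ ⊗ₖ ket0bra0 k) z w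
      = if z.2 = 0 ∧ w.2 = 0 then ρ z.1 w.1 else 0 := by
    intro z w
    simp only [Matrix.kroneckerMap_apply, ket0bra0, Matrix.of_apply,
      mul_ite, mul_one, mul_zero]
    simp only [Fin.ext_iff, Fin.val_zero]
  have h1 : ∀ (j : Fin k) (w : Fin n × Fin k), (U * (ρ ⊗ₖ ket0bra0 k)) (a, j) w
      = if w.2 = 0 then ∑ c : Fin n, K j a c * ρ c w.1 else 0 := by
    intro j w
    rw [Matrix.mul_apply, Fintype.sum_prod_type]
    simp only [hM]
    by_cases hw : w.2 = 0
    · rw [if_pos hw]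
      simp only [hw, and_true, mul_ite, mul_zero]
      simp [Finset.sum_ite_eq', hU0]
    · simp [hw]
  have key : ∀ j : Fin k, (U * (ρ ⊗ₖ ket0bra0 k) * Uᴴ) (a, j) (a', j)
      = ∑ c' : Fin n, (∑ c : Fin n, K j a c * ρ c c') * star (K j a' c') := by
    intro j
    rw [Matrix.mul_apply, Fintype.sum_prod_type]
    simp only [h1, Matrix.conjTranspose_apply]
    simp only [ite_mul, zero_mul]
    simp [Finset.sum_ite_eq', hU0]
  have lhs : (∑ i : Fin k, K i * ρ * (K i)ᴴ) a a'
      = ∑ j : Fin k, ∑ c' : Fin n, (∑ c : Fin n, K j a c * ρ c c') * star (K j a' c') := by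
    simp [Matrix.sum_apply, Matrix.mul_apply, Matrix.conjTranspose_apply]
  rw [lhs]
  simp only [ptraceB, Matrix.of_apply, key]
end
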